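/- arXiv:2503.21028 — 4 statements merged into one kernel-verified Lean document; each statement's English description precedes it below -/
import Mathlib

section
/- Let K be a real algebraic number field of degree d = s + 2t ≥ 2, where s ≥ 1 is the number of real embeddings and 2t the number of non-real embeddings, and let σ_1, ..., σ_{s+t} be a system of embeddings of K into ℂ with σ_1 the identity, σ_2, ..., σ_s the other real embeddings, and σ_{s+1}, ..., σ_{s+t} one representative from each pair of complex-conjugate non-real embeddings. Let (x_2, ..., x_{s+t}) ∈ ℝ^{s-1} × ℂ^t with |x_j| < 1 for all j ∈ {2, ..., s+t}, and let ε > 0 be small enough that |x_j| + ε < 1 for all j ∈ {2, ..., s+t}. Then there exists a positive constant c, depending only on K and ε, such that for every x_1 ∈ ℝ the interval [x_1 - c, x_1 + c] contains an algebraic integer θ ∈ K with |x_j - σ_j(θ)| ≤ ε for every j ∈ {2, ..., s+t}. -/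
open IntermediateField

/-- The "identity" embedding of a real number field `K ⊆ ℝ` into `ℂ`. -/
noncomputable def iotaK (K : IntermediateField ℚ ℝ) : ↥K →+* ℂ :=
  Complex.ofRealHom.comp (algebraMap ↥K ℝ)

open NumberField NumberField.InfinitePlace NumberField.mixedEmbedding Module Finset
open scoped ComplexConjugate

/-- Minkowski: a nonzero algebraic integer with small norm at all places but one. -/
lemma exists_small_alpha (F : Type*) [Field F] [NumberField F]
    (w₀ : InfinitePlace F) {δ : ℝ} (hδ : 0 < δ) :
    ∃ α : 𝓞 F, α ≠ 0 ∧ ∀ w : InfinitePlace F, w ≠ w₀ → w (α : F) < δ := by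
  classical
  set f : InfinitePlace F → NNReal := fun _ => ⟨δ, hδ.le⟩ with hfdef
  set B : NNReal := (minkowskiBound F ↑1 / convexBodyLTFactor F).toNNReal + 1 with hBdef
  have h1 : minkowskiBound F ↑1 ≠ ⊤ := (minkowskiBound_lt_top F 1).ne
  have h2 : (convexBodyLTFactor F : ENNReal) ≠ 0 := by
    exact_mod_cast convexBodyLTFactor_ne_zero F
  have h3 : (convexBodyLTFactor F : ENNReal) ≠ ⊤ := ENNReal.coe_ne_top
  have hdiv : minkowskiBound F ↑1 / (convexBodyLTFactor F : ENNReal) ≠ ⊤ :=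
    (ENNReal.div_lt_top h1 h2).ne
  have hB : minkowskiBound F ↑1 < (convexBodyLTFactor F : ENNReal) * B := by
    have h4 : ((B : NNReal) : ENNReal)
        = minkowskiBound F ↑1 / (convexBodyLTFactor F : ENNReal) + 1 := by
      rw [hBdef, ENNReal.coe_add, ENNReal.coe_toNNReal hdiv, ENNReal.coe_one]
    rw [h4, mul_add, mul_one, ENNReal.mul_div_cancel h2 h3]
    exact ENNReal.lt_add_right h1 h2
  obtain ⟨g, hg1, hg2⟩ := adjust_f F (f := f) (w₁ := w₀) B (fun w _ => by
    simp only [hfdef, ne_eq, ← NNReal.coe_eq_zero]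
    exact ne_of_gt hδ)
  have hvol : minkowskiBound F ↑1 < MeasureTheory.volume (convexBodyLT F g) := by
    rw [convexBodyLT_volume]
    refine lt_of_lt_of_le hB (le_of_eq ?_)
    congr 1
    rw [hg2]
  obtain ⟨α, hα0, hα⟩ := exists_ne_zero_mem_ringOfIntegers_lt F hvol
  refine ⟨α, hα0, fun w hw => ?_⟩
  have h := hα w
  rw [hg1 w hw] at h
  exact h

set_option maxHeartbeats 1000000 in
set_option synthInstance.maxHeartbeats 400000 in
/-- **Theorem 1.** Let `K` be a real number field of degree `d = s + 2t ≥ 2`.  A target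
vector `(x_2, …, x_{s+t}) ∈ ℝ^{s-1} × ℂ^t` is encoded as a function `x` assigning to each
embedding `σ : K →+* ℂ` a complex number, compatible with complex conjugation
(`x (conj ∘ σ) = conj (x σ)`); this forces `x σ ∈ ℝ` for real embeddings `σ` and makes the
data of `x` on the embeddings `≠` identity exactly a point of `ℝ^{s-1} × ℂ^t`.  If
`|x σ| + ε < 1` for every embedding `σ` other than the identity (so that the closed
`ε`-balls around the targets lie in the open unit disc), then there is a constant
`c = c(K, ε) > 0` such that every interval `[x₁ - c, x₁ + c]` contains an algebraic
integer `θ ∈ K` with `|x σ - σ θ| ≤ ε` for every embedding `σ` other than the identity. -/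
theorem pisot_target_approx (K : IntermediateField ℚ ℝ) [FiniteDimensional ℚ K]
    (hd : 2 ≤ Module.finrank ℚ ↥K) (ε : ℝ) (hε : 0 < ε) :
    ∃ c : ℝ, 0 < c ∧
      ∀ x : (↥K →+* ℂ) → ℂ,
        (∀ σ : ↥K →+* ℂ, σ ≠ iotaK K → ‖x σ‖ + ε < 1) →
        (∀ σ : ↥K →+* ℂ, x ((starRingEnd ℂ).comp σ) = starRingEnd ℂ (x σ)) →
        ∀ x₁ : ℝ, ∃ θ : ↥K, IsIntegral ℤ θ ∧ |x₁ - (θ : ℝ)| ≤ c ∧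
          ∀ σ : ↥K →+* ℂ, σ ≠ iotaK K → ‖x σ - σ θ‖ ≤ ε := by
  classical
  haveI : NumberField ↥K := ⟨⟩
  have hconjG : ∀ φ : ↥K →+* ℂ, ComplexEmbedding.conjugate φ = (starRingEnd ℂ).comp φ :=
    fun φ => rfl
  have hreal : ComplexEmbedding.IsReal (iotaK K) := by
    rw [ComplexEmbedding.isReal_iff]
    ext s
    rw [ComplexEmbedding.conjugate_coe_eq]
    exact Complex.conj_ofReal _
  set w₀ : InfinitePlace ↥K := InfinitePlace.mk (iotaK K) with hw₀def
  have hw₀ : InfinitePlace.IsReal w₀ := ⟨iotaK K, hreal, rfl⟩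
  have hembw₀ : w₀.embedding = iotaK K := embedding_mk_eq_of_isReal hreal
  set B := mixedEmbedding.latticeBasis ↥K with hBdef
  set M : ℝ := ∑ i, ‖B i‖ with hMdef
  have hM : 0 ≤ M := Finset.sum_nonneg fun _ _ => norm_nonneg _
  have hδ : 0 < ε / (M + 2) := by positivity
  obtain ⟨α, hα0, hα⟩ := exists_small_alpha ↥K w₀ hδ
  have hαF : (α : ↥K) ≠ 0 := RingOfIntegers.coe_ne_zero_iff.mpr hα0
  set a := mixedEmbedding ↥K (α : ↥K) with hadef
  have hw₀α : 0 ≤ w₀ (α : ↥K) * M := mul_nonneg (apply_nonneg w₀ _) hM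
  refine ⟨w₀ (α : ↥K) * M + 1, by linarith, ?_⟩
  intro x hx1 hcompat x₁
  set y : mixedSpace ↥K :=
    (fun w => if w.1 = w₀ then x₁ else (x (w.1.embedding)).re,
     fun w => x (w.1.embedding)) with hydef
  have ha1 : ∀ w : {w : InfinitePlace ↥K // IsReal w}, a.1 w ≠ 0 := fun w => by
    rw [hadef, mixedEmbedding_apply_isReal]
    exact (map_ne_zero_iff _ (RingHom.injective _)).mpr hαF
  have ha2 : ∀ w : {w : InfinitePlace ↥K // IsComplex w}, a.2 w ≠ 0 := fun w => by
    rw [hadef, mixedEmbedding_apply_isComplex]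
    exact (map_ne_zero_iff _ (RingHom.injective _)).mpr hαF
  set z : mixedSpace ↥K := (fun w => y.1 w / a.1 w, fun w => y.2 w / a.2 w) with hzdef
  have haz : a * z = y := by
    ext w
    · show a.1 w * (y.1 w / a.1 w) = y.1 w
      rw [mul_comm]
      exact div_mul_cancel₀ _ (ha1 w)
    · show a.2 w * (y.2 w / a.2 w) = y.2 w
      rw [mul_comm]
      exact div_mul_cancel₀ _ (ha2 w)
  set t := B.repr z with htdef
  set n : _ → ℤ := fun i => round (t i) with hndef
  set θ₀ : 𝓞 ↥K := α * ∑ i, n i • RingOfIntegers.basis ↥K i with hθ₀def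
  have hcoe : ((θ₀ : ↥K)) = (α : ↥K) * ∑ i, n i • (integralBasis ↥K i) := by
    simp only [hθ₀def, RingOfIntegers.coe_eq_algebraMap, map_mul, map_sum, map_zsmul,
      integralBasis_apply]
  have hψθ : mixedEmbedding ↥K (θ₀ : ↥K) = a * ∑ i, (n i : ℝ) • B i := by
    rw [hcoe, map_mul, map_sum, hadef]
    congr 1
    refine Finset.sum_congr rfl fun i _ => ?_
    rw [map_zsmul, ← latticeBasis_apply, Int.cast_smul_eq_zsmul]
  have hdiff : y - mixedEmbedding ↥K (θ₀ : ↥K) = a * ∑ i, (t i - (n i : ℝ)) • B i := by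
    rw [hψθ, ← haz, ← mul_sub]
    congr 1
    have hz : ∑ i, t i • B i = z := B.sum_repr z
    rw [← hz, ← Finset.sum_sub_distrib]
    exact Finset.sum_congr rfl fun i _ => (sub_smul _ _ _).symm
  have hkey : ∀ w : InfinitePlace ↥K,
      normAtPlace w (y - mixedEmbedding ↥K (θ₀ : ↥K)) ≤ w (α : ↥K) * M := by
    intro w
    rw [hdiff, map_mul, hadef, normAtPlace_apply]
    refine mul_le_mul_of_nonneg_left ?_ (apply_nonneg w _)
    calc normAtPlace w (∑ i, (t i - (n i : ℝ)) • B i)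
        ≤ ‖∑ i, (t i - (n i : ℝ)) • B i‖ := by
          rw [norm_eq_sup'_normAtPlace]
          exact Finset.le_sup' (fun w => normAtPlace w (∑ i, (t i - (n i : ℝ)) • B i))
            (Finset.mem_univ w)
      _ ≤ ∑ i, ‖(t i - (n i : ℝ)) • B i‖ := norm_sum_le _ _
      _ ≤ ∑ i, ‖B i‖ := by
          refine Finset.sum_le_sum fun i _ => ?_
          rw [_root_.norm_smul, Real.norm_eq_abs]
          have h1 : |t i - (n i : ℝ)| ≤ 1 / 2 := abs_sub_round (t i)
          nlinarith [norm_nonneg (B i), abs_nonneg (t i - (n i : ℝ))]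
      _ = M := hMdef.symm
  refine ⟨(θ₀ : ↥K), RingOfIntegers.isIntegral_coe θ₀, ?_, ?_⟩
  · have h := hkey w₀
    have hcomp : normAtPlace w₀ (y - mixedEmbedding ↥K (θ₀ : ↥K))
        = |x₁ - ((θ₀ : ↥K) : ℝ)| := by
      rw [normAtPlace_apply_of_isReal hw₀]
      have h1 : y.1 ⟨w₀, hw₀⟩ = x₁ := if_pos rfl
      have h2 : (mixedEmbedding ↥K ((θ₀ : ↥K))).1 ⟨w₀, hw₀⟩ = (((θ₀ : ↥K) : ℝ)) := by
        rw [mixedEmbedding_apply_isReal]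
        have h3 := embedding_of_isReal_apply hw₀ ((θ₀ : ↥K))
        rw [hembw₀] at h3
        have h4 : ((embedding_of_isReal hw₀ ((θ₀ : ↥K)) : ℝ) : ℂ)
            = ((((θ₀ : ↥K) : ℝ)) : ℂ) := h3
        exact_mod_cast h4
      show ‖y.1 ⟨w₀, hw₀⟩ - (mixedEmbedding ↥K ((θ₀ : ↥K))).1 ⟨w₀, hw₀⟩‖ = _
      rw [h1, h2, Real.norm_eq_abs]
    rw [hcomp] at h
    linarith
  · intro σ hσ
    set w : InfinitePlace ↥K := InfinitePlace.mk σ with hwdef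
    have hwne : w ≠ w₀ := by
      intro h
      rcases mk_eq_iff.mp (h : InfinitePlace.mk σ = InfinitePlace.mk (iotaK K)) with h' | h'
      · exact hσ h'
      · apply hσ
        have h5 : σ = ComplexEmbedding.conjugate (iotaK K) := by
          rw [← h']
          exact (star_star σ).symm
        rw [h5, ComplexEmbedding.isReal_iff.mp hreal]
    have hbound : normAtPlace w (y - mixedEmbedding ↥K (θ₀ : ↥K)) ≤ ε := by
      have h := hkey w
      have hwα := hα w hwne
      calc normAtPlace w (y - mixedEmbedding ↥K (θ₀ : ↥K)) ≤ w (α : ↥K) * M := h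
        _ ≤ (ε / (M + 2)) * M := mul_le_mul_of_nonneg_right hwα.le hM
        _ ≤ ε := by
            rw [div_mul_eq_mul_div, div_le_iff₀ (by linarith)]
            nlinarith
    have hcases : σ = w.embedding ∨ σ = ComplexEmbedding.conjugate (w.embedding) := by
      have hmk : InfinitePlace.mk σ = InfinitePlace.mk w.embedding := by
        rw [mk_embedding]
      rcases mk_eq_iff.mp hmk with h' | h'
      · exact Or.inl h'
      · right
        rw [← h']
        exact (star_star σ).symm
    by_cases hw : IsReal w
    · have hembR : ComplexEmbedding.IsReal w.embedding := isReal_iff.mp hw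
      have hσw : σ = w.embedding := by
        rcases hcases with h' | h'
        · exact h'
        · rw [h', ComplexEmbedding.isReal_iff.mp hembR]
      have hxreal : x w.embedding = (((x w.embedding).re : ℝ) : ℂ) := by
        have h4 := hcompat w.embedding
        rw [show (starRingEnd ℂ).comp w.embedding = w.embedding by
          rw [← hconjG]; exact ComplexEmbedding.isReal_iff.mp hembR] at h4
        exact (Complex.conj_eq_iff_re.mp h4.symm).symm
      have hθcomp : w.embedding ((θ₀ : ↥K))
          = ((embedding_of_isReal hw ((θ₀ : ↥K)) : ℝ) : ℂ) :=
        (embedding_of_isReal_apply hw _).symm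
      have hnw : normAtPlace w (y - mixedEmbedding ↥K (θ₀ : ↥K))
          = |(x w.embedding).re - embedding_of_isReal hw ((θ₀ : ↥K))| := by
        rw [normAtPlace_apply_of_isReal hw]
        show ‖y.1 ⟨w, hw⟩ - (mixedEmbedding ↥K ((θ₀ : ↥K))).1 ⟨w, hw⟩‖ = _
        rw [mixedEmbedding_apply_isReal]
        have h1 : y.1 ⟨w, hw⟩ = (x w.embedding).re := if_neg hwne
        rw [h1, Real.norm_eq_abs]
      rw [hσw, hθcomp, hxreal, ← Complex.ofReal_sub, Complex.norm_real]
      rw [hnw] at hbound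
      simpa using hbound
    · have hw' : IsComplex w := not_isReal_iff_isComplex.mp hw
      have hnw : normAtPlace w (y - mixedEmbedding ↥K (θ₀ : ↥K))
          = ‖x w.embedding - w.embedding ((θ₀ : ↥K))‖ := by
        rw [normAtPlace_apply_of_isComplex hw']
        show ‖y.2 ⟨w, hw'⟩ - (mixedEmbedding ↥K ((θ₀ : ↥K))).2 ⟨w, hw'⟩‖ = _
        rw [mixedEmbedding_apply_isComplex]
      rw [hnw] at hbound
      rcases hcases with h' | h'
      · rw [h']
        exact hbound
      · rw [h']
        have hxc : x (ComplexEmbedding.conjugate w.embedding) = conj (x w.embedding) := by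
          rw [hconjG]; exact hcompat _
        rw [hxc, ComplexEmbedding.conjugate_coe_eq, ← map_sub, Complex.norm_conj]
        exact hbound
end

section
/- Let K be a real algebraic number field of degree d with embeddings σ_1 = id, σ_2, ..., σ_d into ℂ. Then E_K = D_K, where E_K := {β ∈ Z_K : β > 0 and |σ_j(β)| < 2 for all j ∈ {2, ..., d}} and D_K is the set of all positive differences θ' - θ with θ, θ' ∈ ℘_K and θ' > θ. Equivalently, the set of differences ℘_K - ℘_K equals (-E_K) ∪ {0} ∪ E_K. -/
open IntermediateField Pointwise NumberField NumberField.InfinitePlace Filter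

set_option maxHeartbeats 1000000
set_option synthInstance.maxHeartbeats 400000

lemma iotaK_apply (K : IntermediateField ℚ ℝ) (x : ↥K) :
    iotaK K x = Complex.ofReal (x : ℝ) := rfl

lemma abs_iotaK (K : IntermediateField ℚ ℝ) (x : ↥K) :
    ‖iotaK K x‖ = |(x : ℝ)| := by
  rw [iotaK_apply, Complex.norm_real, Real.norm_eq_abs]

lemma mk_ne_mk_iotaK (K : IntermediateField ℚ ℝ) {σ : ↥K →+* ℂ} (hσ : σ ≠ iotaK K) :
    InfinitePlace.mk σ ≠ InfinitePlace.mk (iotaK K) := by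
  intro h
  rcases mk_eq_iff.mp h with h | h
  · exact hσ h
  · apply hσ
    ext x
    have := congrArg (fun φ : ↥K →+* ℂ => (starRingEnd ℂ) (φ x)) h
    simpa [ComplexEmbedding.conjugate_coe_eq, iotaK_apply] using this

lemma gen_auto (K : IntermediateField ℚ ℝ) [FiniteDimensional ℚ K] {θ : ↥K}
    (h1 : 1 < (θ : ℝ)) (h2 : ∀ σ : ↥K →+* ℂ, σ ≠ iotaK K → ‖σ θ‖ < 1) :
    IntermediateField.adjoin ℚ ({θ} : Set ↥K) = ⊤ := by
  by_contra hne
  have hfr : 2 ≤ Module.finrank ↥(IntermediateField.adjoin ℚ ({θ} : Set ↥K)) ↥K := by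
    set E := IntermediateField.adjoin ℚ ({θ} : Set ↥K)
    rcases Nat.lt_or_ge (Module.finrank ↥E ↥K) 2 with h | h
    · exfalso
      have hpos : 0 < Module.finrank ↥E ↥K := Module.finrank_pos
      have h1' : Module.finrank ↥E ↥K = 1 := by omega
      refine hne (IntermediateField.eq_of_le_of_finrank_le' le_top ?_)
      rw [h1']
      exact Nat.one_le_iff_ne_zero.mpr Module.finrank_pos.ne'
    · exact h
  set E := IntermediateField.adjoin ℚ ({θ} : Set ↥K) with hE
  letI : Algebra ↥E ℂ := ((iotaK K).comp (algebraMap ↥E ↥K)).toAlgebra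
  have hcard : Fintype.card (↥K →ₐ[↥E] ℂ) = Module.finrank ↥E ↥K := AlgHom.card ↥E ↥K ℂ
  obtain ⟨ψ₁, ψ₂, hψ⟩ := Fintype.exists_pair_of_one_lt_card (by omega : 1 < Fintype.card (↥K →ₐ[↥E] ℂ))
  have hθE : θ ∈ E := IntermediateField.subset_adjoin ℚ _ rfl
  have key : ∀ ψ : ↥K →ₐ[↥E] ℂ, ψ θ = Complex.ofReal (θ : ℝ) := by
    intro ψ
    have h : θ = algebraMap ↥E ↥K ⟨θ, hθE⟩ := rfl
    rw [h, ψ.commutes]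
    rfl
  have hrh : (ψ₁ : ↥K →+* ℂ) ≠ (ψ₂ : ↥K →+* ℂ) := fun h => hψ (AlgHom.coe_ringHom_injective h)
  have habs : ∀ ψ : ↥K →ₐ[↥E] ℂ, (ψ : ↥K →+* ℂ) ≠ iotaK K → False := by
    intro ψ hne'
    have := h2 _ hne'
    rw [show (ψ : ↥K →+* ℂ) θ = ψ θ from rfl, key ψ, Complex.norm_real, Real.norm_eq_abs] at this
    have h3 : (1:ℝ) ≤ |(θ:ℝ)| := le_trans h1.le (le_abs_self _)
    linarith
  by_cases hc : (ψ₁ : ↥K →+* ℂ) = iotaK K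
  · exact habs ψ₂ (fun h => hrh (hc.trans h.symm))
  · exact habs ψ₁ hc

/-- Existence of a "good" element: coming from a unit, with all non-identity conjugates of
modulus `< 1`, real value of modulus `> 1`, and whose even powers are `≡ 1 mod 2`. -/
lemma exists_good (K : IntermediateField ℚ ℝ) [FiniteDimensional ℚ K]
    (σ₀ : ↥K →+* ℂ) (hσ₀ : σ₀ ≠ iotaK K) :
    ∃ (a : ↥K) (k : ℕ), 0 < k ∧ 1 < |(a : ℝ)| ∧
      (∀ σ : ↥K →+* ℂ, σ ≠ iotaK K → ‖σ a‖ < 1) ∧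
      (∀ n : ℕ, ∃ c : ↥K, IsIntegral ℤ c ∧ 2 * c = a ^ (2 * (k * n)) - 1) := by
  haveI : NumberField ↥K := ⟨⟩
  classical
  set w₁ : InfinitePlace ↥K := InfinitePlace.mk (iotaK K) with hw₁
  obtain ⟨u, hu⟩ := NumberField.Units.dirichletUnitTheorem.exists_unit ↥K w₁
  set a : ↥K := algebraMap (𝓞 ↥K) ↥K (u : 𝓞 ↥K) with ha
  have h2 : ∏ w : InfinitePlace ↥K, (w a) ^ (mult w) = 1 := by
    rw [prod_eq_abs_norm, NumberField.Units.norm ↥K u]; exact Rat.cast_one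
  have h3 : ∀ w : InfinitePlace ↥K, w ≠ w₁ → w a < 1 := by
    intro w hw
    have hpos : 0 < w a := pos_iff.mpr (NumberField.Units.coe_ne_zero u)
    exact (Real.log_neg_iff hpos).mp (hu w hw)
  have hane : a ≠ 0 := NumberField.Units.coe_ne_zero u
  -- the identity place value is > 1
  have hw1 : 1 < w₁ a := by
    set w' : InfinitePlace ↥K := InfinitePlace.mk σ₀ with hw'
    have hww : w' ≠ w₁ := mk_ne_mk_iotaK K hσ₀
    have hmem : w' ∈ (Finset.univ.erase w₁) := Finset.mem_erase.mpr ⟨hww, Finset.mem_univ _⟩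
    have hsplit : (w₁ a) ^ mult w₁ * ∏ w ∈ Finset.univ.erase w₁, (w a) ^ mult w = 1 := by
      rw [← Finset.mul_prod_erase Finset.univ (fun w => (w a) ^ mult w)
        (Finset.mem_univ w₁)] at h2
      exact h2
    have hQ : ∏ w ∈ (Finset.univ.erase w₁).erase w', (w a) ^ mult w ≤ 1 := by
      apply Finset.prod_le_one
      · intro w _; positivity
      · intro w hw
        have hwne : w ≠ w₁ := (Finset.mem_erase.mp (Finset.mem_erase.mp hw).2).1
        exact pow_le_one₀ (apply_nonneg w a) (h3 w hwne).le
    have hPP : ∏ w ∈ Finset.univ.erase w₁, (w a) ^ mult w < 1 := by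
      rw [← Finset.mul_prod_erase _ _ hmem]
      calc (w' a) ^ mult w' * ∏ w ∈ (Finset.univ.erase w₁).erase w', (w a) ^ mult w
          ≤ (w' a) ^ mult w' * 1 := by
            apply mul_le_mul_of_nonneg_left hQ (by positivity)
        _ = (w' a) ^ mult w' := mul_one _
        _ < 1 := pow_lt_one₀ (apply_nonneg w' a) (h3 w' hww) mult_ne_zero
    have hPpos : 0 < ∏ w ∈ Finset.univ.erase w₁, (w a) ^ mult w := by
      apply Finset.prod_pos
      intro w _; exact pow_pos (pos_iff.mpr hane) _
    have hpow : 1 < (w₁ a) ^ mult w₁ := by nlinarith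
    by_contra hle
    push_neg at hle
    exact absurd hpow (not_lt.mpr (pow_le_one₀ (apply_nonneg w₁ a) hle))
  have haR : 1 < |(a : ℝ)| := by
    have : w₁ a = |(a : ℝ)| := by rw [hw₁, apply, abs_iotaK]
    rwa [this] at hw1
  -- divisibility
  haveI hfin : Finite (𝓞 ↥K ⧸ Ideal.span {(2 : 𝓞 ↥K)}) := by
    apply (Ideal.absNorm_ne_zero_iff _).mp
    rw [Ideal.absNorm_span_singleton]
    simp only [ne_eq, Int.natAbs_eq_zero]
    rw [Algebra.norm_eq_zero_iff]
    exact two_ne_zero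
  obtain ⟨i, j, hij, hmapeq⟩ := Finite.exists_ne_map_eq_of_infinite
    (fun n : ℕ => Ideal.Quotient.mk (Ideal.span {(2 : 𝓞 ↥K)}) ((u : 𝓞 ↥K) ^ n))
  -- wlog i < j
  obtain ⟨i, j, hlt, hmapeq⟩ : ∃ i j : ℕ, i < j ∧
      Ideal.Quotient.mk (Ideal.span {(2 : 𝓞 ↥K)}) ((u : 𝓞 ↥K) ^ i) =
      Ideal.Quotient.mk (Ideal.span {(2 : 𝓞 ↥K)}) ((u : 𝓞 ↥K) ^ j) := by
    rcases lt_or_gt_of_ne hij with h | h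
    · exact ⟨i, j, h, hmapeq⟩
    · exact ⟨j, i, h, hmapeq.symm⟩
  set k := j - i with hk
  have hkpos : 0 < k := Nat.sub_pos_of_lt hlt
  have hdvd1 : (2 : 𝓞 ↥K) ∣ (u : 𝓞 ↥K) ^ j - (u : 𝓞 ↥K) ^ i := by
    rw [← Ideal.mem_span_singleton]
    exact (Ideal.Quotient.mk_eq_mk_iff_sub_mem _ _).mp hmapeq.symm
  have hdvd2 : (2 : 𝓞 ↥K) ∣ (u : 𝓞 ↥K) ^ k - 1 := by
    have hj : j = i + k := by omega
    have key : ((u⁻¹ : (𝓞 ↥K)ˣ) : 𝓞 ↥K) ^ i * ((u : 𝓞 ↥K) ^ j - (u : 𝓞 ↥K) ^ i) =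
        (u : 𝓞 ↥K) ^ k - 1 := by
      calc ((u⁻¹ : (𝓞 ↥K)ˣ) : 𝓞 ↥K) ^ i * ((u : 𝓞 ↥K) ^ j - (u : 𝓞 ↥K) ^ i)
          = (((u⁻¹ : (𝓞 ↥K)ˣ) : 𝓞 ↥K) * (u : 𝓞 ↥K)) ^ i * ((u : 𝓞 ↥K) ^ k - 1) := by
            rw [mul_pow, hj, pow_add]; ring
        _ = (u : 𝓞 ↥K) ^ k - 1 := by rw [Units.inv_mul]; rw [one_pow, one_mul]
    exact key ▸ (hdvd1.mul_left _)
  refine ⟨a, k, hkpos, haR, ?_, ?_⟩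
  · intro σ hσ
    have : ‖σ a‖ = (InfinitePlace.mk σ) a := (apply σ a).symm
    rw [this]
    exact h3 _ (mk_ne_mk_iotaK K hσ)
  · intro n
    have hdvd3 : (2 : 𝓞 ↥K) ∣ (u : 𝓞 ↥K) ^ (2 * (k * n)) - 1 := by
      have h6 : ((u : 𝓞 ↥K) ^ k - 1) ∣ ((u : 𝓞 ↥K) ^ k) ^ (2 * n) - 1 ^ (2 * n) :=
        sub_dvd_pow_sub_pow _ _ _
      rw [one_pow, ← pow_mul] at h6
      have : k * (2 * n) = 2 * (k * n) := by ring
      rw [this] at h6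
      exact dvd_trans hdvd2 h6
    obtain ⟨c, hc⟩ := hdvd3
    refine ⟨algebraMap (𝓞 ↥K) ↥K c, NumberField.RingOfIntegers.isIntegral_coe c, ?_⟩
    have := congrArg (algebraMap (𝓞 ↥K) ↥K) hc
    rw [map_sub, map_mul, map_pow, map_one, map_ofNat] at this
    rw [← this, ha]

/-- `℘_K`: the set of Pisot numbers `θ ∈ K` with `ℚ(θ) = K`. -/
def pisotGen (K : IntermediateField ℚ ℝ) : Set ↥K :=
  {θ | IsIntegral ℤ θ ∧ 1 < (θ : ℝ) ∧
    IntermediateField.adjoin ℚ ({θ} : Set ↥K) = ⊤ ∧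
    ∀ σ : ↥K →+* ℂ, σ ≠ iotaK K → ‖σ θ‖ < 1}

/-- `E_K`: the positive algebraic integers of `K` whose images under all embeddings of `K`
into `ℂ` other than the identity have modulus less than `2`. -/
def EK (K : IntermediateField ℚ ℝ) : Set ↥K :=
  {β | IsIntegral ℤ β ∧ 0 < (β : ℝ) ∧
    ∀ σ : ↥K →+* ℂ, σ ≠ iotaK K → ‖σ β‖ < 2}

/-- `D_K`: the set of positive differences of elements of `℘_K`. -/
def DK (K : IntermediateField ℚ ℝ) : Set ↥K :=
  {β | ∃ θ ∈ pisotGen K, ∃ θ' ∈ pisotGen K, (θ : ℝ) < (θ' : ℝ) ∧ β = θ' - θ}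

lemma coe_two (K : IntermediateField ℚ ℝ) : ((2 : ↥K) : ℝ) = 2 := map_ofNat (algebraMap ↥K ℝ) 2

lemma two_int (K : IntermediateField ℚ ℝ) : IsIntegral ℤ (2 : ↥K) := by
  have h : algebraMap ℤ ↥K 2 = (2 : ↥K) := map_ofNat _ 2
  exact h ▸ isIntegral_algebraMap

lemma exists_pisot_pair (K : IntermediateField ℚ ℝ) [FiniteDimensional ℚ K] {β : ↥K}
    (hβ : β ∈ EK K) : ∃ θ, θ ∈ pisotGen K ∧ θ + β ∈ pisotGen K := by
  obtain ⟨hβint, hβpos, hβσ⟩ := hβ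
  by_cases hdeg : ∀ σ : ↥K →+* ℂ, σ = iotaK K
  · have hvac : ∀ (x : ↥K), ∀ σ : ↥K →+* ℂ, σ ≠ iotaK K → ‖σ x‖ < 1 :=
      fun x σ hσ => absurd (hdeg σ) hσ
    have h2R : (1:ℝ) < ((2 : ↥K) : ℝ) := by rw [coe_two]; norm_num
    have h2βR : (1:ℝ) < ((2 + β : ↥K) : ℝ) := by push_cast [coe_two]; linarith
    exact ⟨2, ⟨two_int K, h2R, gen_auto K h2R (hvac 2), hvac 2⟩,
      ⟨(two_int K).add hβint, h2βR, gen_auto K h2βR (hvac _), hvac _⟩⟩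
  · push_neg at hdeg
    obtain ⟨σ₀, hσ₀⟩ := hdeg
    haveI : NumberField ↥K := ⟨⟩
    obtain ⟨a, k, hk, haR, hσa, hc⟩ := exists_good K σ₀ hσ₀
    choose c hcint hc2 using hc
    have hr : 1 < (a:ℝ)^2 := by
      have := sq_abs (a:ℝ)
      nlinarith
    -- real-value identity
    have hid : ∀ n, 2 * ((β * c n : ↥K) : ℝ) = (β:ℝ) * (((a:ℝ)^2)^(k*n) - 1) := by
      intro n
      have h1 := congrArg (fun x : ↥K => (x : ℝ)) (hc2 n)
      push_cast [coe_two] at h1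
      rw [← pow_mul]
      push_cast
      nlinarith [h1]
    -- eventually the real value is large
    have T1 : Tendsto (fun n : ℕ => ((a:ℝ)^2)^(k*n)) atTop atTop :=
      (tendsto_pow_atTop_atTop_of_one_lt hr).comp
        (tendsto_atTop_mono (fun n => Nat.le_mul_of_pos_left n hk) tendsto_id)
    have T2 : Tendsto (fun n : ℕ => (β:ℝ) * (((a:ℝ)^2)^(k*n) - 1)) atTop atTop :=
      (tendsto_atTop_add_const_right atTop (-1 : ℝ) T1).const_mul_atTop hβpos
    have hev1 : ∀ᶠ n in atTop, 1 < ((β * c n : ↥K) : ℝ) := by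
      filter_upwards [T2.eventually_gt_atTop 2] with n hn
      have := hid n
      linarith
    -- eventually all conjugate bounds hold
    have hev2 : ∀ᶠ n in atTop, ∀ σ : ↥K →+* ℂ, σ ≠ iotaK K →
        ‖σ β‖ * ((‖σ a‖)^(2*(k*n)) + 1) < 2 := by
      rw [eventually_all]
      intro σ
      by_cases hσ : σ = iotaK K
      · filter_upwards with n hn; exact absurd hσ hn
      · suffices h : ∀ᶠ n in atTop,
            ‖σ β‖ * ((‖σ a‖)^(2*(k*n)) + 1) < 2 by
          filter_upwards [h] with n hn _; exact hn
        have ht1 : ‖σ a‖ < 1 := hσa σ hσ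
        have ht0 : 0 ≤ ‖σ a‖ := norm_nonneg _
        have T3 : Tendsto (fun n : ℕ => (‖σ a‖)^(2*(k*n))) atTop (nhds 0) :=
          (tendsto_pow_atTop_nhds_zero_of_lt_one ht0 ht1).comp
            (tendsto_atTop_mono (fun n => le_trans (Nat.le_mul_of_pos_left n hk) (Nat.le_mul_of_pos_left (k*n) (by norm_num))) tendsto_id)
        have T4 : Tendsto (fun n : ℕ => ‖σ β‖ * ((‖σ a‖)^(2*(k*n)) + 1))
            atTop (nhds (‖σ β‖ * (0 + 1))) :=
          tendsto_const_nhds.mul (T3.add tendsto_const_nhds)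
        have hlt : ‖σ β‖ * (0 + 1) < 2 := by
          have := hβσ σ hσ
          linarith
        exact T4.eventually_lt_const hlt
    obtain ⟨n, hn1, hn2⟩ := (hev1.and hev2).exists
    set θ : ↥K := β * c n with hθ
    -- conjugate bounds
    have habs : ∀ σ : ↥K →+* ℂ, σ ≠ iotaK K →
        ‖σ θ‖ < 1 ∧ ‖σ (θ + β)‖ < 1 := by
      intro σ hσ
      have hβa := norm_nonneg (σ β)
      have hkey := hn2 σ hσ
      have hplus : θ + β = β * (c n + 1) := by rw [hθ]; ring
      have h2c : (2 : ℂ) * σ (c n) = (σ a)^(2*(k*n)) - 1 := by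
        have := congrArg σ (hc2 n)
        rwa [map_mul, map_ofNat, map_sub, map_pow, map_one] at this
      have h2c1 : (2 : ℂ) * (σ (c n) + 1) = (σ a)^(2*(k*n)) + 1 := by
        rw [mul_add]; rw [h2c]; ring
      constructor
      · have e1 : ‖σ θ‖ = ‖σ β‖ * ‖σ (c n)‖ := by
          rw [hθ, map_mul, norm_mul]
        have e2 : 2 * ‖σ (c n)‖ = ‖(σ a)^(2*(k*n)) - 1‖ := by
          rw [← h2c, norm_mul]; simp
        have e3 : ‖(σ a)^(2*(k*n)) - 1‖ ≤ (‖σ a‖)^(2*(k*n)) + 1 := by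
          calc ‖(σ a)^(2*(k*n)) - 1‖
              ≤ ‖(σ a)^(2*(k*n))‖ + ‖(1:ℂ)‖ := by
                simpa [sub_eq_add_neg] using norm_add_le ((σ a)^(2*(k*n))) (-1)
            _ = (‖σ a‖)^(2*(k*n)) + 1 := by rw [norm_pow, norm_one]
        nlinarith [norm_nonneg (σ (c n))]
      · have e1 : ‖σ (θ + β)‖ = ‖σ β‖ * ‖σ (c n) + 1‖ := by
          rw [hplus, map_mul, norm_mul, map_add, map_one]
        have e2 : 2 * ‖σ (c n) + 1‖ = ‖(σ a)^(2*(k*n)) + 1‖ := by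
          rw [← h2c1, norm_mul]; simp
        have e3 : ‖(σ a)^(2*(k*n)) + 1‖ ≤ (‖σ a‖)^(2*(k*n)) + 1 := by
          calc ‖(σ a)^(2*(k*n)) + 1‖
              ≤ ‖(σ a)^(2*(k*n))‖ + ‖(1:ℂ)‖ :=
                norm_add_le _ _
            _ = (‖σ a‖)^(2*(k*n)) + 1 := by rw [norm_pow, norm_one]
        nlinarith [norm_nonneg (σ (c n) + 1)]
    have hθR : 1 < (θ : ℝ) := hn1
    have hθβR : 1 < ((θ + β : ↥K) : ℝ) := by
      push_cast
      push_cast at hθR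
      linarith
    refine ⟨θ, ⟨hβint.mul (hcint n), hθR,
      gen_auto K hθR (fun σ hσ => (habs σ hσ).1), fun σ hσ => (habs σ hσ).1⟩,
      ⟨(hβint.mul (hcint n)).add hβint, hθβR,
      gen_auto K hθβR (fun σ hσ => (habs σ hσ).2), fun σ hσ => (habs σ hσ).2⟩⟩

/-- **Corollary 1.** For any real number field `K`, `E_K = D_K`; equivalently, the set of
differences `℘_K - ℘_K` equals `(-E_K) ∪ {0} ∪ E_K`. -/
theorem EK_eq_DK (K : IntermediateField ℚ ℝ) [FiniteDimensional ℚ K] :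
    EK K = DK K ∧ pisotGen K - pisotGen K = -EK K ∪ {0} ∪ EK K := by
  have h1 : EK K = DK K := by
    ext β
    constructor
    · intro hβ
      obtain ⟨θ, hθ, hθβ⟩ := exists_pisot_pair K hβ
      refine ⟨θ, hθ, θ + β, hθβ, ?_, by ring⟩
      have := hβ.2.1
      push_cast
      linarith
    · rintro ⟨θ, hθ, θ', hθ', hlt, rfl⟩
      refine ⟨hθ'.1.sub hθ.1, ?_, ?_⟩
      · push_cast
        linarith
      · intro σ hσ
        have b1 := hθ.2.2.2 σ hσ
        have b2 := hθ'.2.2.2 σ hσ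
        rw [map_sub]
        calc ‖σ θ' - σ θ‖ ≤ ‖σ θ'‖ + ‖σ θ‖ := by
              simpa [sub_eq_add_neg] using norm_add_le (σ θ') (-(σ θ))
          _ < 2 := by linarith
  refine ⟨h1, ?_⟩
  have hone : (1 : ↥K) ∈ EK K := by
    refine ⟨isIntegral_one, by norm_num, ?_⟩
    intro σ hσ
    rw [map_one]
    norm_num
  have hne : ∃ θ₀, θ₀ ∈ pisotGen K := by
    have := h1 ▸ hone
    obtain ⟨θ, hθ, _, _, _, _⟩ := this
    exact ⟨θ, hθ⟩
  ext x
  simp only [Set.mem_union, Set.mem_singleton_iff, Set.mem_neg, Set.mem_sub]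
  constructor
  · rintro ⟨θ', hθ', θ, hθ, rfl⟩
    rcases lt_trichotomy ((θ:ℝ)) ((θ':ℝ)) with h | h | h
    · right
      rw [h1]
      exact ⟨θ, hθ, θ', hθ', h, rfl⟩
    · left; right
      have : θ = θ' := by exact_mod_cast h
      rw [this, sub_self]
    · left; left
      rw [h1]
      exact ⟨θ', hθ', θ, hθ, h, by ring⟩
  · rintro ((h | h) | h)
    · rw [h1] at h
      obtain ⟨θ, hθ, θ', hθ', hlt, heq⟩ := h
      exact ⟨θ, hθ, θ', hθ', by linear_combination heq⟩
    · obtain ⟨θ₀, hθ₀⟩ := hne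
      exact ⟨θ₀, hθ₀, θ₀, hθ₀, by rw [h, sub_self]⟩
    · rw [h1] at h
      obtain ⟨θ, hθ, θ', hθ', hlt, heq⟩ := h
      exact ⟨θ', hθ', θ, hθ, heq.symm⟩
end

section
/- Let K be a real algebraic number field of degree d with embeddings σ_1 = id, σ_2, ..., σ_d into ℂ. Then every element β of E_K := {β ∈ Z_K : β > 0 and |σ_j(β)| < 2 for all j ∈ {2, ..., d}} can be written as a difference θ' - θ of two elements θ, θ' ∈ ℘_K in infinitely many ways. -/
open IntermediateField

section Aux

open NumberField ComplexConjugate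

variable (K : IntermediateField ℚ ℝ) [FiniteDimensional ℚ K]

lemma iotaK_isReal : ComplexEmbedding.IsReal (iotaK K) := by
  rw [ComplexEmbedding.isReal_iff]
  ext x
  simp [ComplexEmbedding.conjugate, iotaK]

lemma mk_ne (σ : ↥K →+* ℂ) (hσ : σ ≠ iotaK K) :
    InfinitePlace.mk σ ≠ InfinitePlace.mk (iotaK K) := by
  rw [Ne, InfinitePlace.mk_eq_iff]
  push_neg
  refine ⟨hσ, fun h => hσ ?_⟩
  ext x
  have hx : conj (σ x) = iotaK K x := by
    rw [← ComplexEmbedding.conjugate_coe_eq, h]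
  calc σ x = conj (conj (σ x)) := (Complex.conj_conj _).symm
  _ = conj (iotaK K x) := by rw [hx]
  _ = iotaK K x := by simp [iotaK]

open NumberField.InfinitePlace NumberField.mixedEmbedding MeasureTheory in
lemma exists_small (ε : NNReal) (hε : 0 < ε) :
    ∃ a : ↥K, IsIntegral ℤ a ∧ a ≠ 0 ∧
      ∀ σ : ↥K →+* ℂ, σ ≠ iotaK K → ‖σ a‖ < ε := by
  haveI : NumberField ↥K := ⟨⟩
  classical
  set w₀ : InfinitePlace ↥K := InfinitePlace.mk (iotaK K) with hw₀def
  have hw₀ : IsReal w₀ := isReal_mk_iff.mpr (iotaK_isReal K)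
  set P : NNReal := ∏ w ∈ Finset.univ.erase w₀, ε ^ (mult w) with hP
  have hPne : P ≠ 0 := by
    rw [hP]
    exact Finset.prod_ne_zero_iff.mpr fun w _ => pow_ne_zero _ hε.ne'
  set c : NNReal := convexBodyLTFactor ↥K * P with hc
  have hc0 : (c : ENNReal) ≠ 0 := by
    exact ENNReal.coe_ne_zero.mpr (mul_ne_zero (convexBodyLTFactor_ne_zero ↥K) hPne)
  have hctop : (c : ENNReal) ≠ ⊤ := ENNReal.coe_ne_top
  obtain ⟨n, hn⟩ := ENNReal.exists_nat_gt
    (show minkowskiBound ↥K 1 / c ≠ ⊤ from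
      (ENNReal.div_lt_top (minkowskiBound_lt_top ↥K 1).ne hc0).ne)
  set B : NNReal := (n : NNReal) + 1 with hB
  have h2 : minkowskiBound ↥K 1 < (c : ENNReal) * B := by
    have h3 := (ENNReal.div_lt_iff (Or.inl hc0) (Or.inl hctop)).mp
      (hn.trans (ENNReal.lt_add_right (ENNReal.natCast_ne_top n) one_ne_zero))
    calc minkowskiBound ↥K 1 < ((n : ENNReal) + 1) * c := h3
    _ = (c : ENNReal) * B := by
        rw [mul_comm, hB]
        norm_cast
  have hlt : minkowskiBound ↥K 1 < volume
      (convexBodyLT ↥K (fun w => if w = w₀ then B else ε)) := by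
    rw [convexBodyLT_volume, ← Finset.prod_erase_mul _ _ (Finset.mem_univ w₀)]
    have hm : mult w₀ = 1 := by simp [mult, hw₀]
    rw [if_pos rfl, hm, pow_one]
    have h1 : ∏ w ∈ Finset.univ.erase w₀,
        (if w = w₀ then B else ε) ^ (mult w) = P := by
      rw [hP]
      exact Finset.prod_congr rfl fun w hw => by
        rw [if_neg (Finset.ne_of_mem_erase hw)]
    rw [h1]
    calc minkowskiBound ↥K 1 < (c : ENNReal) * B := h2
    _ = ↑(convexBodyLTFactor ↥K) * ↑(P * B) := by
        rw [hc]
        push_cast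
        ring
  obtain ⟨a, ha0, ha⟩ := exists_ne_zero_mem_ringOfIntegers_lt ↥K hlt
  refine ⟨a, RingOfIntegers.isIntegral_coe a, by exact_mod_cast ha0, fun σ hσ => ?_⟩
  have := ha (InfinitePlace.mk σ)
  rw [if_neg (mk_ne K σ hσ)] at this
  rwa [InfinitePlace.apply] at this

lemma isIntegral_intCast' (m : ℤ) : IsIntegral ℤ ((m : ↥K)) := by
  have := isIntegral_algebraMap (R := ℤ) (A := ↥K) (x := m)
  rwa [algebraMap_int_eq, eq_intCast] at this

lemma exists_growing (ε : ℝ) (hε : 0 < ε) :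
    ∃ t : ↥K, IsIntegral ℤ t ∧ 1 < (t : ℝ) ∧
      ∀ σ : ↥K →+* ℂ, σ ≠ iotaK K → ‖σ t‖ < ε := by
  haveI : NumberField ↥K := ⟨⟩
  classical
  set ε' : ℝ := min ε (1/2) with hε'def
  have hε'0 : 0 < ε' := lt_min hε (by norm_num)
  have hε'half : ε' ≤ 1/2 := min_le_right _ _
  have hε'ε : ε' ≤ ε := min_le_left _ _
  by_cases hall : ∀ σ : ↥K →+* ℂ, σ = iotaK K
  · refine ⟨((2:ℤ) : ↥K), isIntegral_intCast' K 2, ?_, fun σ hσ => absurd (hall σ) hσ⟩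
    have h2 : (((2:ℤ) : ↥K) : ℝ) = 2 := by norm_cast
    rw [h2]
    norm_num
  · push_neg at hall
    obtain ⟨σ₀, hσ₀⟩ := hall
    obtain ⟨a, haint, ha0, ha⟩ := exists_small K ε'.toNNReal
      (by simp [Real.toNNReal_pos, hε'0])
    have hcoe : (ε'.toNNReal : ℝ) = ε' := Real.coe_toNNReal _ hε'0.le
    rw [hcoe] at ha
    -- norm is a nonzero rational integer
    have hnint : IsIntegral ℤ (Algebra.norm ℚ a) := Algebra.isIntegral_norm ℚ haint
    obtain ⟨y, hy⟩ := IsIntegrallyClosed.isIntegral_iff.mp hnint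
    have hy0 : y ≠ 0 := by
      rintro rfl
      rw [map_zero] at hy
      exact (Algebra.norm_ne_zero_iff.mpr ha0) hy.symm
    have h1y : (1:ℝ) ≤ |(Algebra.norm ℚ a : ℝ)| := by
      rw [← hy, algebraMap_int_eq, eq_intCast]
      have := Int.one_le_abs hy0
      push_cast
      rw [← Int.cast_abs]
      exact_mod_cast this
    -- product over embeddings
    have hprod : (‖algebraMap ℚ ℂ (Algebra.norm ℚ a)‖)
        = ∏ σ : ↥K →+* ℂ, ‖σ a‖ := by
      rw [Algebra.norm_eq_prod_embeddings, norm_prod]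
      exact Fintype.prod_equiv (RingHom.equivRatAlgHom _ _).symm _ _ (fun φ => rfl)
    have habs : |(Algebra.norm ℚ a : ℝ)| = ∏ σ : ↥K →+* ℂ, ‖σ a‖ := by
      rw [← hprod]
      rw [show algebraMap ℚ ℂ (Algebra.norm ℚ a) = ((Algebra.norm ℚ a : ℝ) : ℂ) by
        push_cast; norm_cast]
      exact (Complex.norm_real _).symm
    -- split off iota
    have hsplit : ∏ σ : ↥K →+* ℂ, ‖σ a‖
        = ‖(iotaK K) a‖ * ∏ σ ∈ Finset.univ.erase (iotaK K), ‖σ a‖ :=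
      (Finset.mul_prod_erase Finset.univ _ (Finset.mem_univ _)).symm
    set P : ℝ := ∏ σ ∈ Finset.univ.erase (iotaK K), ‖σ a‖ with hPdef
    have hPle : P ≤ 1/2 := by
      rw [hPdef, ← Finset.mul_prod_erase _ _
        (Finset.mem_erase.mpr ⟨hσ₀, Finset.mem_univ σ₀⟩)]
      have h2 : ∏ σ ∈ (Finset.univ.erase (iotaK K)).erase σ₀, ‖σ a‖ ≤ 1 := by
        refine Finset.prod_le_one (fun σ _ => norm_nonneg _) (fun σ hσ => ?_)
        have hne : σ ≠ iotaK K := Finset.ne_of_mem_erase (Finset.mem_of_mem_erase hσ)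
        exact le_trans (ha σ hne).le (by linarith)
      calc ‖σ₀ a‖ * ∏ σ ∈ (Finset.univ.erase (iotaK K)).erase σ₀,
            ‖σ a‖ ≤ ‖σ₀ a‖ * 1 := by
            exact mul_le_mul_of_nonneg_left h2 (norm_nonneg _)
      _ = ‖σ₀ a‖ := mul_one _
      _ ≤ 1/2 := le_trans (ha σ₀ hσ₀).le hε'half
    have hPnn : 0 ≤ P := Finset.prod_nonneg fun σ _ => norm_nonneg _
    have hiota : ‖(iotaK K) a‖ = |(a : ℝ)| := by
      simp [iotaK]
    have h2a : 2 ≤ |(a : ℝ)| := by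
      by_contra hcon
      push_neg at hcon
      have : |(Algebra.norm ℚ a : ℝ)| < 1 := by
        rw [habs, hsplit, hiota]
        calc |(a:ℝ)| * P ≤ |(a:ℝ)| * (1/2) :=
              mul_le_mul_of_nonneg_left hPle (abs_nonneg _)
        _ < 2 * (1/2) := by
            apply mul_lt_mul_of_pos_right hcon
            norm_num
        _ = 1 := by norm_num
      linarith
    refine ⟨a^2, haint.pow 2, ?_, fun σ hσ => ?_⟩
    · have : ((a^2 : ↥K) : ℝ) = (a:ℝ)^2 := by push_cast; ring
      rw [this]
      nlinarith [abs_nonneg (a:ℝ), sq_abs (a:ℝ)]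
    · rw [map_pow, norm_pow]
      have hb := ha σ hσ
      have hnn := norm_nonneg (σ a)
      nlinarith

lemma exists_approx (γ : ↥K) (ε : ℝ) (hε : 0 < ε) :
    ∃ θ : ↥K, IsIntegral ℤ θ ∧
      ∀ σ : ↥K →+* ℂ, σ ≠ iotaK K → ‖σ θ - σ γ‖ < ε := by
  haveI : NumberField ↥K := ⟨⟩
  classical
  set b := Module.finBasis ℚ ↥K with hb
  obtain ⟨m, hm0, hmint⟩ := exists_integral_multiples ℤ ℚ
    (Finset.image b Finset.univ)
  have hmint' : ∀ i, IsIntegral ℤ (m • b i) := fun i =>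
    hmint (b i) (Finset.mem_image_of_mem _ (Finset.mem_univ i))
  set D : ℝ := ∑ i, ∑ σ : ↥K →+* ℂ, ‖σ (b i)‖ with hD
  have hD0 : 0 ≤ D :=
    Finset.sum_nonneg fun i _ => Finset.sum_nonneg fun σ _ => norm_nonneg _
  set C1 : ℝ := (|m| : ℝ) / 2 * D + 1 with hC1
  have hC10 : 0 < C1 := by positivity
  obtain ⟨a, haint, ha0, ha⟩ := exists_small K (ε / C1).toNNReal
    (by simp [Real.toNNReal_pos]; positivity)
  rw [Real.coe_toNNReal _ (by positivity)] at ha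
  set γ' : ↥K := γ * a⁻¹ with hγ'
  set r := b.repr γ' with hr
  set q : _ → ℤ := fun i => round (r i / (m : ℚ)) with hq
  set z : ↥K := ∑ i, q i • (m • b i) with hz
  have hzint : IsIntegral ℤ z := by
    refine IsIntegral.sum _ fun i _ => ?_
    rw [zsmul_eq_mul]
    exact (isIntegral_intCast' K (q i)).mul (hmint' i)
  refine ⟨a * z, haint.mul hzint, fun σ hσ => ?_⟩
  have hγeq : γ = a * γ' := by
    rw [hγ']
    field_simp
  -- expression of z - γ' in the basis
  have hzγ' : z - γ' = ∑ i, ((q i * m : ℚ) - r i) • b i := by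
    rw [hz]
    conv_lhs => rw [← b.sum_repr γ']
    rw [← Finset.sum_sub_distrib]
    refine Finset.sum_congr rfl fun i _ => ?_
    rw [sub_smul]
    congr 1
    rw [← Int.cast_smul_eq_zsmul ℚ, ← Int.cast_smul_eq_zsmul ℚ, smul_smul]
  have hcoefbound : ∀ i, |((q i * m : ℚ) - r i)| ≤ (|m| : ℚ) / 2 := by
    intro i
    have h1 := abs_sub_round (r i / (m : ℚ))
    have hm0' : ((m : ℚ)) ≠ 0 := Int.cast_ne_zero.mpr hm0
    have : (q i * m : ℚ) - r i = ((q i : ℚ) - r i / m) * m := by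
      field_simp
    rw [this, abs_mul]
    calc |(q i : ℚ) - r i / m| * |(m:ℚ)| ≤ (1/2) * |(m:ℚ)| := by
          apply mul_le_mul_of_nonneg_right _ (abs_nonneg _)
          rw [hq, abs_sub_comm]
          exact h1
    _ = (|m| : ℚ)/2 := by
        rw [← Int.cast_abs]
        ring
  -- main bound
  have key : ‖σ z - σ γ'‖ ≤ (|m| : ℝ) / 2 * D := by
    have hσdiff : σ z - σ γ' = ∑ i, (((q i * m : ℚ) - r i : ℚ) : ℂ) * σ (b i) := by
      rw [← map_sub, hzγ', map_sum]
      refine Finset.sum_congr rfl fun i _ => ?_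
      rw [Algebra.smul_def, map_mul]
      congr 1
      rw [show algebraMap ℚ ↥K ((q i * m : ℚ) - r i) = (((q i * m : ℚ) - r i : ℚ) : ↥K) from rfl]
      exact map_ratCast σ _
    rw [hσdiff]
    calc ‖∑ i, (((q i * m : ℚ) - r i : ℚ) : ℂ) * σ (b i)‖
        ≤ ∑ i, ‖(((q i * m : ℚ) - r i : ℚ) : ℂ) * σ (b i)‖ :=
          norm_sum_le _ _
    _ ≤ ∑ i, (|m| : ℝ)/2 * ‖σ (b i)‖ := by
        refine Finset.sum_le_sum fun i _ => ?_
        rw [norm_mul]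
        refine mul_le_mul_of_nonneg_right ?_ (norm_nonneg _)
        have h2 : ‖((((q i * m : ℚ) - r i : ℚ)) : ℂ)‖
            = |(((q i * m : ℚ) - r i : ℚ) : ℝ)| := by
          rw [show ((((q i * m : ℚ) - r i : ℚ)) : ℂ)
            = (((((q i * m : ℚ) - r i : ℚ)) : ℝ) : ℂ) by norm_cast]
          exact Complex.norm_real _
        rw [h2, ← Rat.cast_abs]
        exact_mod_cast hcoefbound i
    _ = (|m| : ℝ)/2 * ∑ i, ‖σ (b i)‖ := by rw [Finset.mul_sum]
    _ ≤ (|m| : ℝ)/2 * D := by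
        refine mul_le_mul_of_nonneg_left ?_ (by positivity)
        rw [hD]
        refine Finset.sum_le_sum fun i _ => ?_
        exact Finset.single_le_sum (f := fun σ' : ↥K →+* ℂ => ‖σ' (b i)‖)
          (fun σ' _ => norm_nonneg _) (Finset.mem_univ σ)
  have : σ (a * z) - σ γ = σ a * (σ z - σ γ') := by
    rw [hγeq, map_mul, map_mul]
    ring
  rw [this, norm_mul]
  calc ‖σ a‖ * ‖σ z - σ γ'‖
      ≤ ‖σ a‖ * C1 := by
        refine mul_le_mul_of_nonneg_left ?_ (norm_nonneg _)
        rw [hC1]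
        linarith [key]
  _ < (ε / C1) * C1 := by
      exact mul_lt_mul_of_pos_right (ha σ hσ) hC10
  _ = ε := by field_simp

open NumberField.InfinitePlace in
lemma adjoin_eq_top_of_pisot (θ : ↥K) (hint : IsIntegral ℤ θ) (hθ : 1 < (θ : ℝ))
    (hc : ∀ σ : ↥K →+* ℂ, σ ≠ iotaK K → ‖σ θ‖ < 1) :
    IntermediateField.adjoin ℚ ({θ} : Set ↥K) = ⊤ := by
  haveI : NumberField ↥K := ⟨⟩
  set x : 𝓞 ↥K := ⟨θ, hint⟩ with hx
  have h₁ : x ≠ 0 := by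
    intro h
    have : (x : ↥K) = 0 := by rw [h]; rfl
    rw [hx] at this
    have : (θ : ℝ) = 0 := by
      have h2 : θ = 0 := this
      rw [h2]; rfl
    linarith
  have h₂ : ∀ ⦃w'⦄, w' ≠ InfinitePlace.mk (iotaK K) → w' (x : ↥K) < 1 := by
    intro w' hw'
    have hemb : embedding w' ≠ iotaK K := by
      intro h
      exact hw' (by rw [← mk_embedding w', h])
    rw [← mk_embedding w', InfinitePlace.apply]
    exact hc _ hemb
  have := NumberField.is_primitive_element_of_infinitePlace_lt h₁ h₂
    (Or.inl (isReal_mk_iff.mpr (iotaK_isReal K)))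
  exact this


end Aux

/-- Every element `β` of `E_K` can be written as a difference `θ' - θ` of two elements of
`℘_K` in infinitely many ways. -/
theorem EK_diff_infinitely_many_ways (K : IntermediateField ℚ ℝ) [FiniteDimensional ℚ K]
    (β : ↥K) (hβ : β ∈ EK K) :
    {p : ↥K × ↥K | p.1 ∈ pisotGen K ∧ p.2 ∈ pisotGen K ∧ p.1 - p.2 = β}.Infinite := by
  obtain ⟨hβint, hβpos, hβconj⟩ := hβ
  haveI : NumberField ↥K := ⟨⟩
  classical
  have hne : (Finset.univ : Finset (↥K →+* ℂ)).Nonempty := ⟨iotaK K, Finset.mem_univ _⟩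
  obtain ⟨B, hB0, hB2, hBle⟩ : ∃ B : ℝ, 0 ≤ B ∧ B < 2 ∧
      ∀ σ : ↥K →+* ℂ, σ ≠ iotaK K → ‖σ β‖ ≤ B := by
    refine ⟨Finset.univ.sup' hne
      (fun σ : ↥K →+* ℂ => if σ = iotaK K then 0 else ‖σ β‖), ?_, ?_, ?_⟩
    · exact Finset.le_sup'_of_le _ (Finset.mem_univ (iotaK K)) (by simp)
    · rw [Finset.sup'_lt_iff]
      intro σ _
      by_cases h : σ = iotaK K
      · simp [h]
      · simpa [h] using hβconj σ h
    · intro σ h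
      have := Finset.le_sup'
        (fun σ : ↥K →+* ℂ => if σ = iotaK K then 0 else ‖σ β‖)
        (Finset.mem_univ σ)
      simpa only [h, ↓reduceIte] using this
  set ε : ℝ := (2 - B)/8 with hε
  have hε0 : 0 < ε := by rw [hε]; linarith
  have hε1 : ε ≤ 1 := by rw [hε]; linarith
  obtain ⟨θ₀, hθ₀int, hθ₀⟩ := exists_approx K (-(β/2)) ε hε0
  obtain ⟨t, htint, ht1, htc⟩ := exists_growing K ε hε0
  obtain ⟨n₀, hn₀⟩ := pow_unbounded_of_one_lt (1 + |(θ₀ : ℝ)|) ht1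
  set f : ℕ → ↥K × ↥K :=
    fun n => (θ₀ + t^(n₀ + n + 1) + β, θ₀ + t^(n₀ + n + 1)) with hf
  have tri : ∀ x y z : ℂ, ‖x + y + z‖
      ≤ ‖x‖ + ‖y‖ + ‖z‖ := fun x y z => by
    calc ‖x + y + z‖ ≤ ‖x + y‖ + ‖z‖ :=
          norm_add_le _ _
    _ ≤ ‖x‖ + ‖y‖ + ‖z‖ := by
        have := norm_add_le x y
        linarith
  have hpowR : ∀ n : ℕ, 1 < ((θ₀ + t^(n₀ + n + 1) : ↥K) : ℝ) := by
    intro n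
    have h1 : ((θ₀ + t^(n₀ + n + 1) : ↥K) : ℝ) = (θ₀ : ℝ) + (t : ℝ)^(n₀ + n + 1) := by
      push_cast; ring
    rw [h1]
    have h2 : (t : ℝ)^n₀ ≤ (t : ℝ)^(n₀ + n + 1) :=
      pow_le_pow_right₀ ht1.le (by omega)
    have h3 := neg_abs_le (θ₀ : ℝ)
    linarith
  have hconj : ∀ (n : ℕ) (σ : ↥K →+* ℂ), σ ≠ iotaK K →
      ‖σ (θ₀ + t^(n₀ + n + 1))‖ < 1 ∧
      ‖σ (θ₀ + t^(n₀ + n + 1) + β)‖ < 1 := by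
    intro n σ hσ
    have hu : ‖σ θ₀ - σ (-(β/2))‖ < ε := hθ₀ σ hσ
    have hv : ‖σ (t^(n₀ + n + 1))‖ < ε := by
      rw [RingHom.map_pow, norm_pow]
      calc ‖σ t‖ ^ (n₀ + n + 1) ≤ ‖σ t‖ :=
            pow_le_of_le_one (norm_nonneg _)
              (le_trans (htc σ hσ).le hε1) (by omega)
      _ < ε := htc σ hσ
    have hw : ‖σ β‖ ≤ B := hBle σ hσ
    have hhalf : σ (-(β/2)) = -(σ β / 2) := by
      rw [map_neg, map_div₀]
      congr 1
      congr 1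
      exact map_ofNat σ 2
    set u : ℂ := σ θ₀ - σ (-(β/2)) with hu'
    have e0 : σ θ₀ = u - σ β / 2 := by
      rw [hu', hhalf]; ring
    have emap : ∀ x y : ↥K, σ (x + y) = σ x + σ y := fun x y => RingHom.map_add σ x y
    have e1 : σ (θ₀ + t^(n₀ + n + 1)) = u + (-(σ β / 2)) + σ (t^(n₀ + n + 1)) := by
      rw [emap, e0]; ring
    have e2 : σ (θ₀ + t^(n₀ + n + 1) + β) = u + (σ β / 2) + σ (t^(n₀ + n + 1)) := by
      rw [emap, emap, e0]; ring
    have habsneg : ‖-(σ β / 2)‖ = ‖σ β‖ / 2 := by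
      rw [norm_neg, norm_div, Complex.norm_two]
    have habspos : ‖σ β / 2‖ = ‖σ β‖ / 2 := by
      rw [norm_div, Complex.norm_two]
    constructor
    · rw [e1]
      refine lt_of_le_of_lt (tri _ _ _) ?_
      rw [habsneg]
      have hεB : ε + B/2 + ε < 1 := by rw [hε]; linarith
      linarith
    · rw [e2]
      refine lt_of_le_of_lt (tri _ _ _) ?_
      rw [habspos]
      have hεB : ε + B/2 + ε < 1 := by rw [hε]; linarith
      linarith
  apply Set.infinite_of_injective_forall_mem (f := f)
  · intro n n' h
    have h2 : ((θ₀ + t^(n₀ + n + 1) : ↥K) : ℝ) = ((θ₀ + t^(n₀ + n' + 1) : ↥K) : ℝ) := by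
      rw [show (θ₀ + t^(n₀ + n + 1) : ↥K) = (f n).2 from rfl, h]
    have h3 : (t : ℝ)^(n₀ + n + 1) = (t : ℝ)^(n₀ + n' + 1) := by
      push_cast at h2
      linarith
    have h4 : StrictMono (fun k : ℕ => (t : ℝ)^k) :=
      fun i j hij => pow_lt_pow_right₀ ht1 hij
    have := h4.injective h3
    omega
  · intro n
    have hp2R := hpowR n
    have hp1R : 1 < ((θ₀ + t^(n₀ + n + 1) + β : ↥K) : ℝ) := by
      have h1 : ((θ₀ + t^(n₀ + n + 1) + β : ↥K) : ℝ)
          = ((θ₀ + t^(n₀ + n + 1) : ↥K) : ℝ) + (β : ℝ) := by push_cast; ring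
      rw [h1]
      linarith
    refine ⟨⟨(hθ₀int.add (htint.pow _)).add hβint, hp1R, ?_, fun σ hσ => (hconj n σ hσ).2⟩,
      ⟨hθ₀int.add (htint.pow _), hp2R, ?_, fun σ hσ => (hconj n σ hσ).1⟩, ?_⟩
    · exact adjoin_eq_top_of_pisot K _ ((hθ₀int.add (htint.pow _)).add hβint) hp1R
        (fun σ hσ => (hconj n σ hσ).2)
    · exact adjoin_eq_top_of_pisot K _ (hθ₀int.add (htint.pow _)) hp2R
        (fun σ hσ => (hconj n σ hσ).1)
    · show (θ₀ + t^(n₀ + n + 1) + β) - (θ₀ + t^(n₀ + n + 1)) = β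
      ring
end

section
/- Let K be a real algebraic number field and let ϵ ∈ (0, 1]. Then the set of ϵ-Pisot numbers θ with ℚ(θ) = K is relatively dense in [1, ∞); that is, there exists ρ' > 0 such that every subinterval of [1, ∞) of the form (x, x + ρ'] contains an ϵ-Pisot number generating K. -/
open IntermediateField

namespace EpsPisotAux

open NumberField NumberField.InfinitePlace NumberField.mixedEmbedding Module Polynomial
open scoped Classical

lemma exists_int_small_at_others (F : Type*) [Field F] [NumberField F]
    (w₀ : InfinitePlace F) {δ : ℝ} (hδ : 0 < δ) :
    ∃ β : 𝓞 F, β ≠ 0 ∧ ∀ w : InfinitePlace F, w ≠ w₀ → w (β : F) < δ := by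
  classical
  set B : NNReal := (minkowskiBound F 1).toNNReal + 1 with hB
  obtain ⟨g, h_geqf, h_gprod⟩ := adjust_f F (w₁ := w₀) (f := fun _ => δ.toNNReal) B
    (fun w _ => by simp [Real.toNNReal_eq_zero, not_le, hδ])
  have hvol : minkowskiBound F ↑1 < MeasureTheory.volume (convexBodyLT F g) := by
    rw [convexBodyLT_volume, h_gprod]
    calc minkowskiBound F ↑1 < ((minkowskiBound F 1).toNNReal : ENNReal) + 1 := by
          rw [ENNReal.coe_toNNReal (minkowskiBound_lt_top F 1).ne]
          exact ENNReal.lt_add_right (minkowskiBound_lt_top F 1).ne one_ne_zero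
      _ = (B : ENNReal) := by rw [hB]; push_cast; ring
      _ ≤ (convexBodyLTFactor F) * B := by
          exact_mod_cast le_mul_of_one_le_left zero_le
            (by exact_mod_cast one_le_convexBodyLTFactor F)
  obtain ⟨a, ha, hlt⟩ := exists_ne_zero_mem_ringOfIntegers_lt F (f := g) hvol
  refine ⟨a, ha, fun w hw => ?_⟩
  have := hlt w
  rw [h_geqf w hw] at this
  exact this.trans_le (le_of_eq (Real.coe_toNNReal δ hδ.le))

lemma exists_covering (F : Type*) [Field F] [NumberField F] :
    ∃ D : ℝ, 0 < D ∧ ∀ v : mixedSpace F, ∃ g : 𝓞 F, ‖v - mixedEmbedding F g‖ ≤ D := by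
  classical
  set b := latticeBasis F
  obtain ⟨C, hC⟩ := (ZSpan.fundamentalDomain_isBounded b).exists_norm_le
  refine ⟨max C 1, lt_max_of_lt_right one_pos, fun v => ?_⟩
  have hmem : (ZSpan.floor b v : mixedSpace F) ∈ mixedEmbedding.integerLattice F :=
    (mem_span_latticeBasis F).mp (SetLike.coe_mem _)
  obtain ⟨a, ha⟩ := LinearMap.mem_range.mp hmem
  refine ⟨a, ?_⟩
  have : v - mixedEmbedding F a = ZSpan.fract b v := by
    rw [ZSpan.fract_apply, ← ha]
    rfl
  rw [this]
  exact le_max_of_le_left (hC _ (ZSpan.fract_mem_fundamentalDomain b v))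

lemma adjoin_eq_top_of_injective (F : Type*) [Field F] [NumberField F] (θ : F)
    (h : Function.Injective fun σ : F →+* ℂ => σ θ) :
    IntermediateField.adjoin ℚ ({θ} : Set F) = ⊤ := by
  classical
  have hθ : IsIntegral ℚ θ := IsIntegral.of_finite ℚ θ
  set p := minpoly ℚ θ with hp
  set q := p.map (algebraMap ℚ ℂ) with hq
  have hq0 : q ≠ 0 := (Polynomial.map_ne_zero_iff (algebraMap ℚ ℂ).injective).mpr
    (minpoly.ne_zero hθ)
  have hroot : ∀ σ : F →+* ℂ, σ θ ∈ q.roots := by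
    intro σ
    rw [Polynomial.mem_roots hq0, Polynomial.IsRoot, Polynomial.eval_map]
    have : algebraMap ℚ ℂ = σ.comp (algebraMap ℚ F) := Subsingleton.elim _ _
    rw [this, ← Polynomial.hom_eval₂]
    have : eval₂ (algebraMap ℚ F) θ p = 0 := by
      simpa [Polynomial.aeval_def] using minpoly.aeval ℚ θ
    rw [this, map_zero]
  have hcard : finrank ℚ F ≤ p.natDegree := by
    have h1 : (Finset.univ.image fun σ : F →+* ℂ => σ θ) ⊆ q.roots.toFinset := by
      intro z hz
      obtain ⟨σ, _, rfl⟩ := Finset.mem_image.mp hz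
      exact Multiset.mem_toFinset.mpr (hroot σ)
    calc finrank ℚ F = Fintype.card (F →+* ℂ) := (Embeddings.card F ℂ).symm
      _ = (Finset.univ.image fun σ : F →+* ℂ => σ θ).card :=
          (Finset.card_image_of_injective _ h).symm ▸ (Finset.card_univ).symm
      _ ≤ q.roots.toFinset.card := Finset.card_le_card h1
      _ ≤ Multiset.card q.roots := q.roots.toFinset_card_le
      _ ≤ q.natDegree := q.card_roots'
      _ = p.natDegree := by rw [hq, Polynomial.natDegree_map]
  have hfr : finrank ℚ (IntermediateField.adjoin ℚ ({θ} : Set F)) = p.natDegree := by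
    simpa using IntermediateField.adjoin.finrank hθ
  refine IntermediateField.eq_of_le_of_finrank_le le_top ?_
  rw [IntermediateField.finrank_top']
  omega

set_option maxHeartbeats 1000000 in
lemma key_lemma (F : Type*) [Field F] [NumberField F] (φ₀ : F →+* ℂ)
    (hφ₀ : ComplexEmbedding.IsReal φ₀) (ϵ : ℝ) (hϵ0 : 0 < ϵ) (hϵ1 : ϵ ≤ 1) :
    ∃ ρ' : ℝ, 0 < ρ' ∧ ∀ x : ℝ, 1 ≤ x → ∃ θ : 𝓞 F, ∃ r : ℝ,
      φ₀ (θ : F) = (r : ℂ) ∧ x < r ∧ r ≤ x + ρ' ∧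
      (∀ σ : F →+* ℂ, σ ≠ φ₀ → ‖σ (θ : F)‖ < ϵ) ∧
      Function.Injective fun σ : F →+* ℂ => σ (θ : F) := by
  classical
  set w₀ : InfinitePlace F := mk φ₀ with hw₀def
  have hw₀ : IsReal w₀ := ⟨φ₀, hφ₀, rfl⟩
  have hemb₀ : embedding w₀ = φ₀ := embedding_mk_eq_of_isReal hφ₀
  -- if `mk σ = w₀` then `σ = φ₀`
  have hmkeq : ∀ σ : F →+* ℂ, mk σ = w₀ → σ = φ₀ := by
    intro σ hσ
    rcases mk_eq_iff.mp hσ with h | h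
    · exact h
    · have h2 : ComplexEmbedding.conjugate (ComplexEmbedding.conjugate σ) = σ := star_star σ
      rw [h, ComplexEmbedding.isReal_iff.mp hφ₀] at h2
      exact h2.symm
  set N := Fintype.card (InfinitePlace F) with hN
  set e := Fintype.equivFin (InfinitePlace F) with he
  set j : InfinitePlace F → ℕ := fun w => (e w : ℕ) with hj
  have hjinj : Function.Injective j := fun a b hab => e.injective (Fin.ext hab)
  have hjlt : ∀ w, j w < N := fun w => (e w).2
  set μ : ℝ := ϵ / (4 * (N + 1)) with hμ
  have hμ0 : 0 < μ := by positivity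
  obtain ⟨D, hD0, hDcov⟩ := exists_covering F
  obtain ⟨β, hβ0, hβ⟩ := exists_int_small_at_others F w₀ (δ := μ / (4 * D)) (by positivity)
  have hβF : (β : F) ≠ 0 := RingOfIntegers.coe_ne_zero_iff.mpr hβ0
  have hwβpos : ∀ w : InfinitePlace F, 0 < w (β : F) := fun w => pos_iff.mpr hβF
  have hβsmall : ∀ w : InfinitePlace F, w ≠ w₀ → w (β : F) * D ≤ μ / 4 := by
    intro w hw
    have h5 := hβ w hw
    have h6 : w (β : F) * D < μ / (4 * D) * D := by nlinarith [hwβpos w]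
    have h7 : μ / (4 * D) * D = μ / 4 := by field_simp
    linarith
  set ρ : ℝ := w₀ (β : F) * D with hρ
  have hρ0 : 0 < ρ := mul_pos (hwβpos w₀) hD0
  refine ⟨2 * ρ + 1, by positivity, fun x hx => ?_⟩
  set m : InfinitePlace F → ℝ := fun w => (j w + 1) * μ with hm
  have hm1 : ∀ w, μ ≤ m w := by
    intro w
    have h5 : (1 : ℝ) ≤ (j w : ℝ) + 1 := by
      have := Nat.cast_nonneg (α := ℝ) (j w); linarith
    simpa [hm, one_mul] using mul_le_mul_of_nonneg_right h5 hμ0.le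
  have hm2 : ∀ w, m w ≤ N * μ := by
    intro w
    have h5 : (j w : ℝ) + 1 ≤ (N : ℝ) := by exact_mod_cast hjlt w
    simpa [hm] using mul_le_mul_of_nonneg_right h5 hμ0.le
  set t : mixedSpace F :=
    (fun w => if w.1 = w₀ then x + ρ + 1 else m w.1, fun w => (m w.1 : ℂ) * Complex.I)
    with ht
  set bm := mixedEmbedding F (β : F) with hbm
  set v : mixedSpace F := (fun w => t.1 w / bm.1 w, fun w => t.2 w / bm.2 w) with hv
  obtain ⟨g, hg⟩ := hDcov v
  set θ : 𝓞 F := β * g with hθdef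
  have hθmul : mixedEmbedding F (θ : F) = bm * mixedEmbedding F (g : F) := by
    rw [hθdef, hbm]
    push_cast
    exact map_mul _ _ _
  -- real coordinates
  have key1 : ∀ w : {w : InfinitePlace F // IsReal w},
      |t.1 w - (mixedEmbedding F (θ : F)).1 w| ≤ w.1 (β : F) * D := by
    intro w
    have hbmabs : |bm.1 w| = w.1 (β : F) := by
      rw [hbm, mixedEmbedding_apply_isReal, ← Real.norm_eq_abs]
      exact norm_embedding_of_isReal w.2 _
    have hbne : bm.1 w ≠ 0 := by
      intro h0
      have h6 := hwβpos w.1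
      rw [← hbmabs, h0, abs_zero] at h6
      exact lt_irrefl _ h6
    have h1 : (mixedEmbedding F (θ : F)).1 w = bm.1 w * (mixedEmbedding F (g : F)).1 w := by
      rw [hθmul]; rfl
    have h2 : t.1 w = bm.1 w * v.1 w := by
      show t.1 w = bm.1 w * (t.1 w / bm.1 w)
      rw [mul_comm, div_mul_cancel₀ _ hbne]
    rw [h1, h2, ← mul_sub, abs_mul, hbmabs]
    have h3 : |v.1 w - (mixedEmbedding F (g : F)).1 w| ≤ D := by
      have h4 : v.1 w - (mixedEmbedding F (g : F)).1 w
          = (v - mixedEmbedding F (g : F)).1 w := rfl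
      rw [h4, ← Real.norm_eq_abs]
      exact ((norm_le_pi_norm _ w).trans (norm_fst_le _)).trans hg
    exact mul_le_mul_of_nonneg_left h3 (hwβpos w.1).le
  -- complex coordinates
  have key2 : ∀ w : {w : InfinitePlace F // IsComplex w},
      ‖t.2 w - (mixedEmbedding F (θ : F)).2 w‖ ≤ w.1 (β : F) * D := by
    intro w
    have hbmabs : ‖bm.2 w‖ = w.1 (β : F) := by
      rw [hbm, mixedEmbedding_apply_isComplex]
      exact norm_embedding_eq w.1 _
    have hbne : bm.2 w ≠ 0 := by
      intro h0
      have h6 := hwβpos w.1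
      rw [← hbmabs, h0, norm_zero] at h6
      exact lt_irrefl _ h6
    have h1 : (mixedEmbedding F (θ : F)).2 w = bm.2 w * (mixedEmbedding F (g : F)).2 w := by
      rw [hθmul]; rfl
    have h2 : t.2 w = bm.2 w * v.2 w := by
      show t.2 w = bm.2 w * (t.2 w / bm.2 w)
      rw [mul_comm, div_mul_cancel₀ _ hbne]
    rw [h1, h2, ← mul_sub, norm_mul, hbmabs]
    have h3 : ‖v.2 w - (mixedEmbedding F (g : F)).2 w‖ ≤ D := by
      have h4 : v.2 w - (mixedEmbedding F (g : F)).2 w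
          = (v - mixedEmbedding F (g : F)).2 w := rfl
      rw [h4]
      exact ((norm_le_pi_norm _ w).trans (norm_snd_le _)).trans hg
    exact mul_le_mul_of_nonneg_left h3 (hwβpos w.1).le

  -- the identity coordinate
  set r : ℝ := embedding_of_isReal hw₀ (θ : F) with hr
  have hrcoord : (mixedEmbedding F (θ : F)).1 ⟨w₀, hw₀⟩ = r :=
    mixedEmbedding_apply_isReal F _ _
  have hφ₀θ : φ₀ (θ : F) = (r : ℂ) := by
    rw [hr, embedding_of_isReal_apply, hemb₀]
  have ht0 : t.1 ⟨w₀, hw₀⟩ = x + ρ + 1 := by simp [ht]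
  have hrange : x + 1 ≤ r ∧ r ≤ x + 2 * ρ + 1 := by
    have hk := key1 ⟨w₀, hw₀⟩
    rw [ht0, hrcoord] at hk
    have h12 := abs_le.mp hk
    exact ⟨by linarith [h12.2], by linarith [h12.1]⟩
  -- place values away from w₀
  have HA : ∀ w : InfinitePlace F, w ≠ w₀ → |w (θ : F) - m w| ≤ μ / 4 := by
    intro w hw
    by_cases hreal : IsReal w
    · have hk := key1 ⟨w, hreal⟩
      have ht1 : t.1 ⟨w, hreal⟩ = m w := by simp [ht, hw]
      have hcoord : (mixedEmbedding F (θ : F)).1 ⟨w, hreal⟩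
          = embedding_of_isReal hreal (θ : F) := mixedEmbedding_apply_isReal F _ _
      rw [ht1, hcoord] at hk
      have hwθ : w (θ : F) = |embedding_of_isReal hreal (θ : F)| := by
        rw [← Real.norm_eq_abs, norm_embedding_of_isReal]
      have h8 := abs_abs_sub_abs_le_abs_sub (embedding_of_isReal hreal (θ : F)) (m w)
      rw [abs_of_nonneg (hμ0.le.trans (hm1 w))] at h8
      rw [hwθ]
      refine h8.trans ?_
      rw [abs_sub_comm]
      exact hk.trans (hβsmall w hw)
    · have hcx : IsComplex w := not_isReal_iff_isComplex.mp hreal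
      have hk := key2 ⟨w, hcx⟩
      have hcoord : (mixedEmbedding F (θ : F)).2 ⟨w, hcx⟩
          = embedding w (θ : F) := mixedEmbedding_apply_isComplex F _ _
      have ht2 : t.2 ⟨w, hcx⟩ = (m w : ℂ) * Complex.I := rfl
      rw [ht2, hcoord] at hk
      have hwθ : w (θ : F) = ‖embedding w (θ : F)‖ := by
        rw [norm_embedding_eq]
      have habsI : ‖(m w : ℂ) * Complex.I‖ = m w := by
        rw [norm_mul, Complex.norm_I, mul_one, Complex.norm_real, Real.norm_eq_abs,
          abs_of_nonneg (hμ0.le.trans (hm1 w))]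
      have h8 : |‖embedding w (θ : F)‖ - ‖(m w : ℂ) * Complex.I‖|
          ≤ ‖embedding w (θ : F) - (m w : ℂ) * Complex.I‖ :=
        abs_norm_sub_norm_le _ _
      rw [habsI] at h8
      rw [hwθ]
      refine h8.trans ?_
      rw [← norm_neg, neg_sub]
      exact hk.trans (hβsmall w hw)
  -- imaginary parts at complex places are nonzero
  have HIm : ∀ w : {w : InfinitePlace F // IsComplex w}, (embedding w.1 (θ : F)).im ≠ 0 := by
    intro w
    have hwne : w.1 ≠ w₀ := fun h => (not_isReal_iff_isComplex.mpr (h ▸ w.2)) hw₀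
    have hk := key2 w
    have hcoord : (mixedEmbedding F (θ : F)).2 w = embedding w.1 (θ : F) :=
      mixedEmbedding_apply_isComplex F _ _
    have ht2 : t.2 w = (m w.1 : ℂ) * Complex.I := rfl
    rw [ht2, hcoord] at hk
    have h9 : |((m w.1 : ℂ) * Complex.I - embedding w.1 (θ : F)).im| ≤ μ / 4 :=
      (Complex.abs_im_le_norm _).trans (hk.trans (hβsmall w.1 hwne))
    have h10 : ((m w.1 : ℂ) * Complex.I - embedding w.1 (θ : F)).im
        = m w.1 - (embedding w.1 (θ : F)).im := by
      simp [Complex.sub_im, Complex.mul_im]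
    rw [h10] at h9
    have h11 := abs_le.mp h9
    intro h0
    rw [h0] at h11
    have := hm1 w.1
    linarith [h11.2]
  -- bound on all non-identity embeddings
  have hϵeq : ϵ = 4 * ((N : ℝ) + 1) * μ := by
    rw [hμ]; field_simp
  have Habs : ∀ σ : F →+* ℂ, σ ≠ φ₀ → ‖σ (θ : F)‖ < ϵ := by
    intro σ hσ
    have hwne : mk σ ≠ w₀ := fun h => hσ (hmkeq σ h)
    have h10 : ‖σ (θ : F)‖ = (mk σ) (θ : F) := (apply σ _).symm
    have h11 := abs_le.mp (HA (mk σ) hwne)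
    have h12 := hm2 (mk σ)
    have hN0 : (0 : ℝ) ≤ (N : ℝ) := Nat.cast_nonneg N
    rw [h10]
    linarith [h11.2]
  -- injectivity
  have Hinj : Function.Injective fun σ : F →+* ℂ => σ (θ : F) := by
    intro σ τ hστ
    simp only at hστ
    by_contra hne
    have key_abs : ∀ π : F →+* ℂ, π ≠ φ₀ → ‖π (θ : F)‖ < 1 :=
      fun π hπ => lt_of_lt_of_le (Habs π hπ) hϵ1
    have hrbig : 1 < r := by linarith [hrange.1]
    by_cases hσ0 : σ = φ₀
    · have hτ0 : τ ≠ φ₀ := fun h => hne (by rw [hσ0, h])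
      have h11 := key_abs τ hτ0
      rw [← hστ, hσ0, hφ₀θ, Complex.norm_real, Real.norm_eq_abs, abs_of_pos (by linarith)] at h11
      linarith
    by_cases hτ0 : τ = φ₀
    · have h11 := key_abs σ hσ0
      rw [hστ, hτ0, hφ₀θ, Complex.norm_real, Real.norm_eq_abs, abs_of_pos (by linarith)] at h11
      linarith
    have hwσ : mk σ ≠ w₀ := fun h => hσ0 (hmkeq σ h)
    have hwτ : mk τ ≠ w₀ := fun h => hτ0 (hmkeq τ h)
    by_cases hww : mk σ = mk τ
    · rcases mk_eq_iff.mp hww with h | h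
      · exact hne h
      · have him0 : (σ (θ : F)).im = 0 := by
          have h13 : τ (θ : F) = (starRingEnd ℂ) (σ (θ : F)) := by
            rw [← h]; rfl
          rw [← hστ] at h13
          exact Complex.conj_eq_iff_im.mp h13.symm
        by_cases hreal : IsReal (mk σ)
        · have hre := isReal_iff.mp hreal
          rcases embedding_mk_eq σ with h2 | h2
          · rw [h2] at hre
            exact hne (by rw [← h, ComplexEmbedding.isReal_iff.mp hre])
          · rw [h2] at hre
            have h14 : ComplexEmbedding.IsReal σ :=
              ComplexEmbedding.isReal_conjugate_iff.mp hre
            exact hne (by rw [← h, ComplexEmbedding.isReal_iff.mp h14])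
        · have hcx : IsComplex (mk σ) := not_isReal_iff_isComplex.mp hreal
          have hιm := HIm ⟨mk σ, hcx⟩
          rcases embedding_mk_eq σ with h2 | h2
          · rw [show embedding (mk σ) = σ from h2] at hιm
            exact hιm him0
          · rw [show embedding (mk σ) = ComplexEmbedding.conjugate σ from h2] at hιm
            apply hιm
            rw [NumberField.ComplexEmbedding.conjugate_coe_eq]
            simp [him0]
    · have e1 := abs_le.mp (HA (mk σ) hwσ)
      have e2 := abs_le.mp (HA (mk τ) hwτ)
      have heqv : (mk σ) (θ : F) = (mk τ) (θ : F) := by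
        rw [apply, apply, hστ]
      have hjne : j (mk σ) ≠ j (mk τ) := fun hh => hww (hjinj hh)
      have hjd : (1 : ℝ) ≤ |(j (mk σ) : ℝ) - (j (mk τ) : ℝ)| := by
        rcases Nat.lt_or_ge (j (mk σ)) (j (mk τ)) with hlt | hge
        · have h20 : (j (mk σ) : ℝ) + 1 ≤ (j (mk τ) : ℝ) := by exact_mod_cast hlt
          rw [abs_sub_comm, abs_of_nonneg (by linarith)]
          linarith
        · have hlt : j (mk τ) < j (mk σ) := lt_of_le_of_ne hge (Ne.symm hjne)
          have h20 : (j (mk τ) : ℝ) + 1 ≤ (j (mk σ) : ℝ) := by exact_mod_cast hlt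
          rw [abs_of_nonneg (by linarith)]
          linarith
      have h13 : |m (mk σ) - m (mk τ)| ≤ μ / 2 := by
        rw [abs_le]
        constructor
        · linarith [e1.2, e2.1, heqv.le, heqv.ge]
        · linarith [e1.1, e2.2, heqv.le, heqv.ge]
      have h14 : μ ≤ |m (mk σ) - m (mk τ)| := by
        have h15 : m (mk σ) - m (mk τ) = ((j (mk σ) : ℝ) - (j (mk τ) : ℝ)) * μ := by
          show ((j (mk σ) : ℝ) + 1) * μ - ((j (mk τ) : ℝ) + 1) * μ = _
          ring
        rw [h15, abs_mul, abs_of_pos hμ0]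
        have h16 := mul_le_mul_of_nonneg_right hjd hμ0.le
        rwa [one_mul] at h16
      linarith
  exact ⟨θ, r, hφ₀θ, by linarith [hrange.1], by linarith [hrange.2], Habs, Hinj⟩

end EpsPisotAux

/-- **Corollary 4** (Fan–Schmeling).  For `ϵ ∈ (0,1]`, the set of `ϵ`-Pisot numbers
generating the real number field `K` (algebraic integers `θ ∈ K` with `θ > 1`,
`ℚ(θ) = K`, and `|σ θ| < ϵ` for every embedding `σ` of `K` into `ℂ` other than the
identity) is relatively dense in `[1, ∞)`: there is `ρ' > 0` such that every interval
`(x, x + ρ']` with `x ≥ 1` contains such a number. -/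
theorem epsPisotGen_relDense (K : IntermediateField ℚ ℝ) [FiniteDimensional ℚ K]
    (ϵ : ℝ) (hϵ : ϵ ∈ Set.Ioc (0 : ℝ) 1) :
    ∃ ρ' : ℝ, 0 < ρ' ∧ ∀ x : ℝ, 1 ≤ x →
      ∃ θ : ↥K, IsIntegral ℤ θ ∧ 1 < (θ : ℝ) ∧
        IntermediateField.adjoin ℚ ({θ} : Set ↥K) = ⊤ ∧
        (∀ σ : ↥K →+* ℂ, σ ≠ iotaK K → ‖σ θ‖ < ϵ) ∧
        x < (θ : ℝ) ∧ (θ : ℝ) ≤ x + ρ' := by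
  haveI : CharZero ↥K := charZero_of_injective_algebraMap (algebraMap ℚ ↥K).injective
  haveI : NumberField ↥K := ⟨⟩
  have hφ₀ : NumberField.ComplexEmbedding.IsReal (iotaK K) := by
    rw [NumberField.ComplexEmbedding.isReal_iff]
    ext z
    rw [NumberField.ComplexEmbedding.conjugate_coe_eq]
    exact Complex.conj_ofReal _
  obtain ⟨ρ', hρ', H⟩ := EpsPisotAux.key_lemma ↥K (iotaK K) hφ₀ ϵ hϵ.1 hϵ.2
  refine ⟨ρ', hρ', fun x hx => ?_⟩
  obtain ⟨θ, r, hθr, hxr, hrx, habs, hinj⟩ := H x hx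
  have hreq : ((θ : ↥K) : ℝ) = r := by
    have : ((((θ : ↥K) : ℝ)) : ℂ) = (r : ℂ) := hθr
    exact_mod_cast this
  exact ⟨(θ : ↥K), NumberField.RingOfIntegers.isIntegral_coe θ, by rw [hreq]; linarith,
    EpsPisotAux.adjoin_eq_top_of_injective ↥K ((θ : NumberField.RingOfIntegers ↥K) : ↥K) hinj, habs,
    by rw [hreq]; exact hxr, by rw [hreq]; exact hrx⟩
end
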